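/- (Mirror-mean property of Bregman exponential families.) Let ψ : ℝ^p → ℝ be strictly convex and continuously differentiable, let w₀ ∈ ℝ^p, and suppose the function w ↦ exp(−D_ψ(w, w₀)) is Lebesgue integrable on ℝ^p with positive integral, that w ↦ ∇ψ(w) exp(−D_ψ(w, w₀)) is integrable, and that exp(−D_ψ(w, w₀)) → 0 as ‖w‖ → ∞ (together with the boundary decay needed for integration by parts). Then the random vector w with density p(w) = c·exp(−D_ψ(w, w₀)) (c the normalizing constant) satisfies E[∇ψ(w)] = ∇ψ(w₀), i.e., ∫_{ℝ^p} ∇ψ(w) c·exp(−D_ψ(w, w₀)) dw = ∇ψ(w₀). -/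

import Mathlib

open RealInnerProductSpace MeasureTheory

/-- Bregman divergence of a differentiable function `ψ`. -/
noncomputable def bregman {p : ℕ} (ψ : EuclideanSpace ℝ (Fin p) → ℝ)
    (w w' : EuclideanSpace ℝ (Fin p)) : ℝ :=
  ψ w - ψ w' - ⟪gradient ψ w', w - w'⟫

/-- If a function on `ℝ^{n+1}` is integrable and has an integrable partial derivative in the
`i`-th coordinate direction, then the integral of that partial derivative vanishes. -/
lemma integral_insertNth_deriv_eq_zero {n : ℕ} (i : Fin (n + 1))
    (f f' : (Fin (n + 1) → ℝ) → ℝ)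
    (hd : ∀ (y : Fin n → ℝ) (t : ℝ),
      HasDerivAt (fun s => f (i.insertNth s y)) (f' (i.insertNth t y)) t)
    (hf : Integrable f) (hf' : Integrable f') : ∫ x, f' x = 0 := by
  have hmp := MeasureTheory.volume_preserving_piFinSuccAbove (fun _ : Fin (n + 1) => ℝ) i
  set e := MeasurableEquiv.piFinSuccAbove (fun _ : Fin (n + 1) => ℝ) i with he
  have hsymm : ∀ z : ℝ × (Fin n → ℝ), e.symm z = i.insertNth z.1 z.2 := fun z => rfl
  have hmps : MeasurePreserving e.symm := MeasurePreserving.symm e hmp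
  have hf2 : Integrable (f ∘ e.symm) :=
    (hmps.integrable_comp_emb e.symm.measurableEmbedding).mpr hf
  have hf'2 : Integrable (f' ∘ e.symm) :=
    (hmps.integrable_comp_emb e.symm.measurableEmbedding).mpr hf'
  have key : ∫ z : ℝ × (Fin n → ℝ), (f' ∘ e.symm) z ∂(volume.prod volume) = 0 := by
    rw [Measure.volume_eq_prod] at hf2 hf'2
    rw [MeasureTheory.integral_prod_symm _ hf'2]
    have hae : (fun y : Fin n → ℝ => ∫ t : ℝ, (f' ∘ e.symm) (t, y)) =ᵐ[volume]
        (fun _ => (0 : ℝ)) := by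
      filter_upwards [hf2.prod_left_ae, hf'2.prod_left_ae] with y h1 h2
      have h3 : Integrable (fun t : ℝ => f (i.insertNth t y)) := by
        simpa [Function.comp, hsymm] using h1
      have h4 : Integrable (fun t : ℝ => f' (i.insertNth t y)) := by
        simpa [Function.comp, hsymm] using h2
      have := integral_eq_zero_of_hasDerivAt_of_integrable (fun t => hd y t) h4 h3
      simpa [Function.comp, hsymm] using this
    calc (∫ y : Fin n → ℝ, ∫ t : ℝ, f' (e.symm (t, y)))
        = ∫ _y : Fin n → ℝ, (0 : ℝ) := integral_congr_ae hae
      _ = 0 := by simp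
  have htr := hmps.integral_comp e.symm.measurableEmbedding f'
  rw [← htr, Measure.volume_eq_prod]
  exact key

theorem bregman_exponential_family_mirror_mean {p : ℕ}
    (ψ : EuclideanSpace ℝ (Fin p) → ℝ)
    (hψdiff : ContDiff ℝ 1 ψ)
    (hψconv : StrictConvexOn ℝ Set.univ ψ)
    (w₀ : EuclideanSpace ℝ (Fin p))
    (hint : Integrable (fun w : EuclideanSpace ℝ (Fin p) =>
      Real.exp (-bregman ψ w w₀)))
    (hpos : 0 < ∫ w : EuclideanSpace ℝ (Fin p), Real.exp (-bregman ψ w w₀))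
    (hint' : Integrable (fun w : EuclideanSpace ℝ (Fin p) =>
      Real.exp (-bregman ψ w w₀) • gradient ψ w))
    (hdecay : Filter.Tendsto (fun w : EuclideanSpace ℝ (Fin p) =>
      Real.exp (-bregman ψ w w₀)) (Filter.cocompact _) (nhds 0)) :
    (∫ w : EuclideanSpace ℝ (Fin p), Real.exp (-bregman ψ w w₀))⁻¹
        • (∫ w : EuclideanSpace ℝ (Fin p), Real.exp (-bregman ψ w w₀) • gradient ψ w)
      = gradient ψ w₀ := by
  classical
  cases p with
  | zero =>
      haveI : Subsingleton (EuclideanSpace ℝ (Fin 0)) :=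
        ⟨fun a b => PiLp.ext (fun i => i.elim0)⟩
      exact Subsingleton.elim _ _
  | succ n =>
  set G : EuclideanSpace ℝ (Fin (n + 1)) → ℝ :=
    fun w => Real.exp (-bregman ψ w w₀) with hG
  set g₀ : EuclideanSpace ℝ (Fin (n + 1)) := gradient ψ w₀ with hg₀
  set K : EuclideanSpace ℝ (Fin (n + 1)) → EuclideanSpace ℝ (Fin (n + 1)) :=
    fun w => G w • (g₀ - gradient ψ w) with hK
  -- gradient of G
  have hgrad : ∀ w, HasGradientAt G (G w • (g₀ - gradient ψ w)) w := by
    intro w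
    have hψw : HasFDerivAt ψ (InnerProductSpace.toDual ℝ _ (gradient ψ w)) w :=
      ((hψdiff.differentiable one_ne_zero) w).hasGradientAt.hasFDerivAt
    have hinner : HasFDerivAt (fun v : EuclideanSpace ℝ (Fin (n + 1)) => ⟪g₀, v - w₀⟫)
        (InnerProductSpace.toDual ℝ _ g₀) w := by
      have h1 := (InnerProductSpace.toDual ℝ (EuclideanSpace ℝ (Fin (n + 1))) g₀
        ).hasFDerivAt (x := w)
      have h2 := h1.sub_const ⟪g₀, w₀⟫
      simpa [inner_sub_right] using h2
    have hb : HasFDerivAt (fun v => bregman ψ v w₀)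
        (InnerProductSpace.toDual ℝ _ (gradient ψ w) - InnerProductSpace.toDual ℝ _ g₀) w := by
      have := (hψw.sub_const (ψ w₀)).sub hinner
      exact this
    have hexp := (Real.hasDerivAt_exp (-(bregman ψ w w₀))).comp_hasFDerivAt w hb.neg
    rw [hasGradientAt_iff_hasFDerivAt]
    have hkey : InnerProductSpace.toDual ℝ _ (G w • (g₀ - gradient ψ w)) =
        Real.exp (-(bregman ψ w w₀)) •
          (-(InnerProductSpace.toDual ℝ _ (gradient ψ w) - InnerProductSpace.toDual ℝ _ g₀)) := by
      ext v
      simp [hG, inner_sub_left, inner_smul_left, mul_sub]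
    rw [hkey]
    exact hexp
  have hKint : Integrable K := by
    have := (hint.smul_const g₀).sub hint'
    refine this.congr (Filter.Eventually.of_forall fun w => ?_)
    simp [hK, hG, smul_sub]
  -- the integral of K vanishes
  have hK0 : ∫ w, K w = 0 := by
    have hcoord : ∀ i : Fin (n + 1), (∫ w, K w) i = 0 := by
      intro i
      have hproj : (∫ w, K w) i = ∫ w, (K w) i := by
        have := (EuclideanSpace.proj i
          (𝕜 := ℝ)).integral_comp_comm hKint
        exact this.symm
      rw [hproj]
      -- transfer to the pi space
      have hE : MeasurePreserving ((MeasurableEquiv.toLp 2 (Fin (n + 1) → ℝ)).symm).symm :=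
        MeasurePreserving.symm _ (EuclideanSpace.volume_preserving_symm_measurableEquiv_toLp (Fin (n + 1)))
      set E := ((MeasurableEquiv.toLp 2 (Fin (n + 1) → ℝ)).symm).symm with hEdef
      have htrans : ∫ x : Fin (n + 1) → ℝ, (K (E x)) i = ∫ w, (K w) i :=
        hE.integral_comp ((MeasurableEquiv.toLp 2 (Fin (n + 1) → ℝ)).symm).symm.measurableEmbedding
          (fun w => (K w) i)
      rw [← htrans]
      -- apply the key lemma
      refine integral_insertNth_deriv_eq_zero i (fun x => G (E x)) (fun x => (K (E x)) i)
        ?_ ?_ ?_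
      · intro y t
        -- the straight line in Euclidean space
        set v : Fin (n + 1) → ℝ := Pi.single i (1 : ℝ) with hv
        have hline : ∀ s : ℝ, i.insertNth s y = i.insertNth (0 : ℝ) y + s • v := by
          intro s
          funext j
          refine Fin.succAboveCases i ?_ ?_ j
          · simp [hv]
          · intro k
            simp [hv, Fin.insertNth_apply_succAbove, Pi.single_eq_of_ne (Fin.succAbove_ne i k)]
        have hder : HasDerivAt (fun s : ℝ => i.insertNth s y) v t := by
          have h1 : HasDerivAt (fun s : ℝ => i.insertNth (0 : ℝ) y + s • v) v t := by
            simpa using ((hasDerivAt_id t).smul_const v).const_add (i.insertNth (0 : ℝ) y)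
          simpa [← hline] using h1
        have hc : HasDerivAt (fun s : ℝ => E (i.insertNth s y))
            (EuclideanSpace.single i (1 : ℝ)) t := by
          have := ((PiLp.continuousLinearEquiv 2 ℝ (fun _ : Fin (n + 1) => ℝ)).symm :
            (Fin (n + 1) → ℝ) →L[ℝ] EuclideanSpace ℝ (Fin (n + 1))
            ).hasFDerivAt.comp_hasDerivAt t hder
          exact this
        have hcomp := (hgrad (E (i.insertNth t y))).hasFDerivAt.comp_hasDerivAt t hc
        refine hcomp.congr_deriv ?_
        rw [InnerProductSpace.toDual_apply_apply]
        rw [EuclideanSpace.inner_single_right]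
        simp [hK]
      · exact (hE.integrable_comp_emb
          ((MeasurableEquiv.toLp 2 (Fin (n + 1) → ℝ)).symm).symm.measurableEmbedding).mpr hint
      · have hKi : Integrable (fun w => (K w) i) :=
          (EuclideanSpace.proj i (𝕜 := ℝ)).integrable_comp hKint
        exact (hE.integrable_comp_emb
          ((MeasurableEquiv.toLp 2 (Fin (n + 1) → ℝ)).symm).symm.measurableEmbedding).mpr hKi
    ext i
    exact hcoord i
  -- conclude
  have hsub : (∫ w, G w • g₀) - (∫ w, G w • gradient ψ w) = 0 := by
    rw [← integral_sub (hint.smul_const g₀) hint']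
    simpa [hK, smul_sub] using hK0
  have heq : (∫ w, G w • gradient ψ w) = (∫ w, G w) • g₀ := by
    have := sub_eq_zero.mp hsub
    rw [← this, integral_smul_const]
  show (∫ w, G w)⁻¹ • (∫ w, G w • gradient ψ w) = g₀
  rw [heq, smul_smul, inv_mul_cancel₀ (ne_of_gt hpos), one_smul]
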